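/- Let f be a probability density on (0,∞) such that for some ε > 0, |t|^{1+ε} e^t f(e^t) → 0 as |t| → ∞. Consider the scale model p(x|θ) = θ^{-1} f(|x|/θ) for θ > 0. Then π(θ) = θ^{-1} is a permissible prior for this model: the formal posterior π(θ|x) ∝ θ^{-1} p(x|θ) is proper for every x ≠ 0, and with the approximating compact sets Θ_i = [e^{-i}, e^{i}] and restricted priors π_i(θ) = (2i)^{-1} θ^{-1} 1_{Θ_i}(θ), the expected logarithmic discrepancy ∫ κ{π(·|x) | π_i(·|x)} p_i(x) dx converges to 0 as i → ∞, where p_i(x) = ∫_{Θ_i} p(x|θ)π_i(θ)dθ. -/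

import Mathlib

open MeasureTheory Filter Set Real Topology

namespace Stmt3

variable {f : ℝ → ℝ}

lemma injOn_div (a : ℝ) (ha : 0 < a) {s : Set ℝ} (hsub : s ⊆ Ioi 0) :
    InjOn (fun θ : ℝ => a / θ) s := by
  intro u hu v hv h
  have hu0 : (0:ℝ) < u := hsub hu
  have hv0 : (0:ℝ) < v := hsub hv
  rw [div_eq_div_iff (ne_of_gt hu0) (ne_of_gt hv0)] at h
  exact (mul_left_cancel₀ (ne_of_gt ha) h).symm

lemma hasDeriv_div (a : ℝ) {s : Set ℝ} (hsub : s ⊆ Ioi 0) :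
    ∀ θ ∈ s, HasDerivWithinAt (fun θ : ℝ => a / θ) (-(a * (θ ^ 2)⁻¹)) s θ := by
  intro θ hθ
  have hθ0 : θ ≠ 0 := ne_of_gt (hsub hθ)
  have h1 : HasDerivAt (fun θ : ℝ => a * θ⁻¹) (a * -(θ ^ 2)⁻¹) θ :=
    (hasDerivAt_inv hθ0).const_mul a
  have h2 : HasDerivAt (fun θ : ℝ => a / θ) (-(a * (θ ^ 2)⁻¹)) θ := by
    simpa [div_eq_mul_inv, mul_comm, mul_neg] using h1
  exact h2.hasDerivWithinAt

lemma image_div_Ioi (a : ℝ) (ha : 0 < a) : (fun θ : ℝ => a / θ) '' Ioi 0 = Ioi 0 := by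
  ext y
  constructor
  · rintro ⟨θ, hθ, rfl⟩
    exact div_pos ha hθ
  · intro hy
    exact ⟨a / y, div_pos ha hy, by field_simp⟩

lemma image_div_Icc (a : ℝ) (ha : 0 < a) {l r : ℝ} (hl : 0 < l) (hlr : l ≤ r) :
    (fun θ : ℝ => a / θ) '' Icc l r = Icc (a / r) (a / l) := by
  have hr : 0 < r := lt_of_lt_of_le hl hlr
  ext y
  simp only [mem_image, mem_Icc]
  constructor
  · rintro ⟨θ, ⟨h1, h2⟩, rfl⟩
    have hθ : 0 < θ := lt_of_lt_of_le hl h1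
    constructor
    · exact div_le_div_of_nonneg_left ha.le hθ h2
    · exact div_le_div_of_nonneg_left ha.le hl h1
  · rintro ⟨h1, h2⟩
    have hy : 0 < y := lt_of_lt_of_le (div_pos ha hr) h1
    refine ⟨a / y, ⟨?_, ?_⟩, by field_simp⟩
    · rw [le_div_iff₀ hy]
      calc l * y ≤ l * (a / l) := by gcongr
        _ = a := by field_simp
    · rw [div_le_iff₀ hy]
      calc a = r * (a / r) := by field_simp
        _ ≤ r * y := by gcongr

end Stmt3

namespace Stmt3X
open Stmt3

-- change of variables θ ↦ a/θ on a measurable subset of Ioi 0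
lemma cov_div (f : ℝ → ℝ) (a : ℝ) (ha : 0 < a) {s : Set ℝ} (hs : MeasurableSet s)
    (hsub : s ⊆ Ioi 0) :
    ∫ y in (fun θ : ℝ => a / θ) '' s, f y
      = ∫ θ in s, a * ((θ⁻¹ * f (a / θ)) * θ⁻¹) := by
  rw [integral_image_eq_integral_abs_deriv_smul hs (hasDeriv_div a hsub)
    (injOn_div a ha hsub) f]
  refine setIntegral_congr_fun hs (fun θ hθ => ?_)
  have hθ0 : (0:ℝ) < θ := hsub hθ
  have : |(-(a * (θ ^ 2)⁻¹))| = a * (θ ^ 2)⁻¹ := by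
    rw [abs_neg, abs_of_nonneg]; positivity
  rw [smul_eq_mul, this, sq, mul_inv]
  ring

lemma cov_div_integrable (f : ℝ → ℝ) (a : ℝ) (ha : 0 < a) {s : Set ℝ} (hs : MeasurableSet s)
    (hsub : s ⊆ Ioi 0) (hfint : IntegrableOn f ((fun θ : ℝ => a / θ) '' s)) :
    IntegrableOn (fun θ : ℝ => θ⁻¹ * (θ⁻¹ * f (a / θ))) s := by
  rw [integrableOn_image_iff_integrableOn_abs_deriv_smul hs (hasDeriv_div a hsub)
    (injOn_div a ha hsub) f] at hfint
  have h2 : IntegrableOn (fun θ : ℝ => a⁻¹ * |(-(a * (θ ^ 2)⁻¹))| • f (a / θ)) s :=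
    hfint.const_mul _
  refine h2.congr_fun (fun θ hθ => ?_) hs
  have hθ0 : (0:ℝ) < θ := hsub hθ
  have : |(-(a * (θ ^ 2)⁻¹))| = a * (θ ^ 2)⁻¹ := by
    rw [abs_neg, abs_of_nonneg]; positivity
  simp only [smul_eq_mul]
  rw [this, sq, mul_inv]
  field_simp

lemma exp_image_Icc (a b : ℝ) : Real.exp '' Icc a b = Icc (Real.exp a) (Real.exp b) := by
  ext y
  simp only [mem_image, mem_Icc]
  constructor
  · rintro ⟨t, ⟨h1, h2⟩, rfl⟩
    exact ⟨Real.exp_le_exp.2 h1, Real.exp_le_exp.2 h2⟩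
  · rintro ⟨h1, h2⟩
    have hy : 0 < y := lt_of_lt_of_le (Real.exp_pos a) h1
    refine ⟨Real.log y, ⟨?_, ?_⟩, Real.exp_log hy⟩
    · rwa [Real.le_log_iff_exp_le hy]
    · rwa [Real.log_le_iff_le_exp hy]

lemma cov_exp (f : ℝ → ℝ) {s : Set ℝ} (hs : MeasurableSet s) :
    ∫ y in Real.exp '' s, f y = ∫ t in s, Real.exp t * f (Real.exp t) := by
  rw [integral_image_eq_integral_abs_deriv_smul hs
    (fun t _ => (Real.hasDerivAt_exp t).hasDerivWithinAt) Real.exp_injective.injOn f]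
  refine setIntegral_congr_fun hs (fun t _ => ?_)
  simp only [smul_eq_mul]
  rw [abs_of_pos (Real.exp_pos t)]

lemma cov_exp_integrable (f : ℝ → ℝ) {s : Set ℝ} (hs : MeasurableSet s)
    (hfint : IntegrableOn f (Real.exp '' s)) :
    IntegrableOn (fun t : ℝ => Real.exp t * f (Real.exp t)) s := by
  rw [integrableOn_image_iff_integrableOn_abs_deriv_smul hs
    (fun t _ => (Real.hasDerivAt_exp t).hasDerivWithinAt) Real.exp_injective.injOn f] at hfint
  refine hfint.congr_fun (fun t _ => ?_) hs
  simp only [smul_eq_mul]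
  rw [abs_of_pos (Real.exp_pos t)]

end Stmt3X

namespace Stmt3Y
open Stmt3 Stmt3X

lemma negMulLog_le_one {u : ℝ} (h0 : 0 ≤ u) (h1 : u ≤ 1) : Real.negMulLog u ≤ 1 := by
  rcases eq_or_lt_of_le h0 with h | h
  · simp [← h]
  · have hinv : Real.log u⁻¹ ≤ u⁻¹ - 1 := Real.log_le_sub_one_of_pos (by positivity)
    have : Real.negMulLog u = u * Real.log u⁻¹ := by
      rw [Real.log_inv, Real.negMulLog]; ring
    rw [this]
    calc u * Real.log u⁻¹ ≤ u * (u⁻¹ - 1) := by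
          apply mul_le_mul_of_nonneg_left hinv h0
      _ = 1 - u := by field_simp
      _ ≤ 1 := by linarith

lemma negMulLog_le_rpow {δ : ℝ} (hδ : 0 < δ) {u : ℝ} (h0 : 0 ≤ u) :
    Real.negMulLog u ≤ δ⁻¹ * u ^ (1 - δ) := by
  rcases eq_or_lt_of_le h0 with h | h
  · rw [← h]
    simp only [Real.negMulLog_zero]
    exact mul_nonneg (by positivity) (Real.rpow_nonneg le_rfl _)
  · have hlog : Real.log (u ^ (-δ)) ≤ u ^ (-δ) := le_trans
      (Real.log_le_sub_one_of_pos (Real.rpow_pos_of_pos h _)) (by linarith)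
    have hlog2 : Real.log (u ^ (-δ)) = -δ * Real.log u := Real.log_rpow h _
    have hneg : -Real.log u ≤ δ⁻¹ * u ^ (-δ) := by
      rw [hlog2] at hlog
      calc -Real.log u = δ⁻¹ * (-δ * Real.log u) := by field_simp
        _ ≤ δ⁻¹ * u ^ (-δ) := by
            apply mul_le_mul_of_nonneg_left hlog (by positivity)
    calc Real.negMulLog u = u * (-Real.log u) := by rw [Real.negMulLog]; ring
      _ ≤ u * (δ⁻¹ * u ^ (-δ)) := mul_le_mul_of_nonneg_left hneg h0
      _ = δ⁻¹ * (u ^ (1:ℝ) * u ^ (-δ)) := by rw [Real.rpow_one]; ring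
      _ = δ⁻¹ * u ^ (1 - δ) := by rw [← Real.rpow_add h]; ring_nf

end Stmt3Y

namespace Stmt3Z
open Stmt3 Stmt3X Stmt3Y

set_option maxHeartbeats 1000000 in
lemma main_tendsto (h : ℝ → ℝ) (h_nonneg : ∀ t, 0 ≤ h t)
    (h_int : Integrable h) (h_total : ∫ t, h t = 1)
    {ε M : ℝ} (hε : 0 < ε) (hM : 1 ≤ M)
    (htb : ∀ t : ℝ, M ≤ |t| → h t ≤ |t| ^ (-(1+ε))) :
    Tendsto (fun i : ℕ => ∫ σ : ℝ,
      Real.negMulLog (∫ t in Icc ((i:ℝ)*σ - i) ((i:ℝ)*σ + i), h t)) atTop (𝓝 0) := by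
  set δ : ℝ := ε / (2*(1+ε)) with hδ_def
  have hδ0 : 0 < δ := by positivity
  have hδ1 : δ < 1 := by
    rw [hδ_def, div_lt_one (by positivity)]; linarith
  have hexp : (-(1+ε)) * (1-δ) = -(1+ε/2) := by
    rw [hδ_def]; field_simp; ring
  -- basic bounds on the window integrals
  have Wnn : ∀ a b : ℝ, 0 ≤ ∫ t in Icc a b, h t :=
    fun a b => setIntegral_nonneg measurableSet_Icc (fun t _ => h_nonneg t)
  have Wle1 : ∀ a b : ℝ, (∫ t in Icc a b, h t) ≤ 1 := by
    intro a b
    rw [← h_total]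
    exact setIntegral_le_integral h_int (Filter.Eventually.of_forall h_nonneg)
  -- key window bound
  have key : ∀ (n σ : ℝ), 0 < n → 1 < |σ| → M ≤ n * (|σ|-1) →
      (∫ t in Icc (n*σ - n) (n*σ + n), h t) ≤ 2 * (|σ|-1) ^ (-(1+ε)) * n ^ (-ε) := by
    intro n σ hn hσ hMn
    have hσ1 : 0 < |σ| - 1 := by linarith
    have hpos : 0 < n * (|σ|-1) := by positivity
    have hpt : ∀ t ∈ Icc (n*σ - n) (n*σ + n), h t ≤ (n * (|σ|-1)) ^ (-(1+ε)) := by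
      intro t ht
      have habs : n * (|σ|-1) ≤ |t| := by
        rcases abs_cases σ with ⟨hc, _⟩ | ⟨hc, _⟩
        · have h1 : n * (|σ|-1) ≤ t := by
            rw [hc]; nlinarith [ht.1]
          exact h1.trans (le_abs_self t)
        · have h1 : t ≤ -(n * (|σ|-1)) := by
            rw [hc]; nlinarith [ht.2]
          have : n * (|σ|-1) ≤ -t := by linarith
          exact this.trans (neg_le_abs t)
      exact (htb t (hMn.trans habs)).trans
        (Real.rpow_le_rpow_of_nonpos hpos habs (by linarith))
    have hconst : IntegrableOn (fun _ : ℝ => (n * (|σ|-1)) ^ (-(1+ε)))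
        (Icc (n*σ - n) (n*σ + n)) := by
      exact integrableOn_const measure_Icc_lt_top.ne
    calc (∫ t in Icc (n*σ-n) (n*σ+n), h t)
        ≤ ∫ _ in Icc (n*σ-n) (n*σ+n), (n*(|σ|-1))^(-(1+ε)) :=
          setIntegral_mono_on h_int.integrableOn hconst measurableSet_Icc hpt
      _ = (2*n) * (n*(|σ|-1))^(-(1+ε)) := by
          rw [setIntegral_const, Real.volume_real_Icc_of_le (by linarith),
            smul_eq_mul]
          ring
      _ = 2 * (|σ|-1)^(-(1+ε)) * n^(-ε) := by
          rw [Real.mul_rpow hn.le hσ1.le,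
            show n ^ (-ε) = n * n^(-(1+ε)) by
              rw [show (-ε) = 1 + (-(1+ε)) by ring, Real.rpow_add hn, Real.rpow_one]]
          ring
  -- the dominating function
  set p : ℝ := 1 + ε/2 with hp_def
  have hp1 : 1 < p := by rw [hp_def]; linarith
  set B0 : ℝ → ℝ := fun y => if y ≤ 2 then 1 else 2 * δ⁻¹ * (y-1) ^ (-p) with hB0_def
  have hB0_meas : Measurable B0 := by
    rw [hB0_def]
    exact Measurable.ite measurableSet_Iic measurable_const (by fun_prop)
  have hB0nn : ∀ y, 0 ≤ B0 y := by
    intro y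
    rw [hB0_def]
    dsimp only
    split_ifs with hy
    · norm_num
    · have : (0:ℝ) ≤ y - 1 := by linarith [not_le.1 hy]
      exact mul_nonneg (mul_nonneg (by norm_num) (inv_nonneg.2 hδ0.le))
        (Real.rpow_nonneg this _)
  have hB0_Ici : IntegrableOn B0 (Ici 0) := by
    have P1 : IntegrableOn B0 (Icc (0:ℝ) 2) := by
      have hc : IntegrableOn (fun _ : ℝ => (1:ℝ)) (Icc (0:ℝ) 2) volume :=
        integrableOn_const measure_Icc_lt_top.ne
      refine hc.congr_fun (fun y hy => ?_) measurableSet_Icc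
      rw [hB0_def]
      exact (if_pos hy.2).symm
    have P2 : IntegrableOn B0 (Ioi (2:ℝ)) := by
      have hg2int : IntegrableOn (fun y : ℝ => (2 * δ⁻¹ * 2^p) * y ^ (-p)) (Ioi 2) :=
        (integrableOn_Ioi_rpow_of_lt (by linarith) (by norm_num)).const_mul _
      refine hg2int.mono' (hB0_meas.aestronglyMeasurable.restrict) ?_
      rw [ae_restrict_iff' measurableSet_Ioi]
      refine Filter.Eventually.of_forall (fun y hy => ?_)
      have hy2 : (2:ℝ) < y := hy
      have hB0y : B0 y = 2 * δ⁻¹ * (y-1) ^ (-p) := by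
        rw [hB0_def]; exact if_neg (not_le.2 hy2)
      rw [Real.norm_eq_abs, abs_of_nonneg (hB0nn y), hB0y]
      have h1 : (y-1) ^ (-p) ≤ (y/2) ^ (-p) :=
        Real.rpow_le_rpow_of_nonpos (by linarith) (by linarith) (by linarith)
      have h2 : (y/2) ^ (-p) = 2^p * y ^ (-p) := by
        rw [Real.div_rpow (by linarith) (by norm_num), Real.rpow_neg (by norm_num : (0:ℝ) ≤ 2),
          div_eq_mul_inv, inv_inv]
        ring
      calc 2 * δ⁻¹ * (y-1) ^ (-p) ≤ 2 * δ⁻¹ * (y/2) ^ (-p) := by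
            apply mul_le_mul_of_nonneg_left h1 (by positivity)
        _ = (2 * δ⁻¹ * 2^p) * y ^ (-p) := by rw [h2]; ring
    have hsub : Ici (0:ℝ) ⊆ Icc (0:ℝ) 2 ∪ Ioi 2 := by
      intro y hy
      by_cases hy2 : y ≤ 2
      · exact Or.inl ⟨hy, hy2⟩
      · exact Or.inr (not_le.1 hy2)
    exact (P1.union P2).mono_set hsub
  have hB_int : Integrable (fun σ : ℝ => B0 |σ|) := by
    have hI1 : IntegrableOn (fun σ : ℝ => B0 |σ|) (Ici 0) := by
      refine hB0_Ici.congr_fun (fun σ hσ => ?_) measurableSet_Ici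
      rw [abs_of_nonneg (hσ : (0:ℝ) ≤ σ)]
    have hg : Integrable ((Ici (0:ℝ)).indicator B0) :=
      (integrable_indicator_iff measurableSet_Ici).2 hB0_Ici
    have hgneg : Integrable (fun σ : ℝ => (Ici (0:ℝ)).indicator B0 (-σ)) := hg.comp_neg
    have hI2 : IntegrableOn (fun σ : ℝ => B0 |σ|) (Iic 0) := by
      have hgn2 : IntegrableOn (fun σ : ℝ => (Ici (0:ℝ)).indicator B0 (-σ)) (Iic 0) volume :=
        hgneg.integrableOn
      refine hgn2.congr_fun (fun σ hσ => ?_) measurableSet_Iic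
      have h1 : -σ ∈ Ici (0:ℝ) := by simpa using (hσ : σ ≤ 0)
      dsimp only
      rw [Set.indicator_of_mem h1, abs_of_nonpos (hσ : σ ≤ 0)]
    have : IntegrableOn (fun σ : ℝ => B0 |σ|) (Iic 0 ∪ Ici 0) := hI2.union hI1
    rw [Iic_union_Ici] at this
    exact integrableOn_univ.1 this
  -- continuity / measurability of the integrands
  have hcont : ∀ i : ℕ, Continuous fun σ : ℝ =>
      (∫ t in Icc ((i:ℝ)*σ - i) ((i:ℝ)*σ + i), h t) := by
    intro i
    have hprim : Continuous fun b => ∫ t in (0:ℝ)..b, h t :=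
      intervalIntegral.continuous_primitive (fun a b => h_int.intervalIntegrable) 0
    have heq : (fun σ : ℝ => (∫ t in Icc ((i:ℝ)*σ - i) ((i:ℝ)*σ + i), h t))
        = fun σ : ℝ => (∫ t in (0:ℝ)..((i:ℝ)*σ + i), h t) - ∫ t in (0:ℝ)..((i:ℝ)*σ - i), h t := by
      funext σ
      rw [intervalIntegral.integral_interval_sub_left h_int.intervalIntegrable
        h_int.intervalIntegrable, integral_Icc_eq_integral_Ioc,
        ← intervalIntegral.integral_of_le (by nlinarith [Nat.cast_nonneg (α := ℝ) i] :
          (i:ℝ)*σ - i ≤ (i:ℝ)*σ + i)]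
    rw [heq]
    exact (hprim.comp (by continuity)).sub (hprim.comp (by continuity))
  have hFmeas : ∀ᶠ i : ℕ in atTop, AEStronglyMeasurable
      (fun σ : ℝ => Real.negMulLog (∫ t in Icc ((i:ℝ)*σ - i) ((i:ℝ)*σ + i), h t)) volume :=
    Filter.Eventually.of_forall fun i =>
      (Real.continuous_negMulLog.comp (hcont i)).aestronglyMeasurable
  -- eventual domination
  obtain ⟨i₀, hi₀⟩ := exists_nat_ge M
  have h_bound : ∀ᶠ i : ℕ in atTop, ∀ᵐ σ : ℝ,
      ‖Real.negMulLog (∫ t in Icc ((i:ℝ)*σ - i) ((i:ℝ)*σ + i), h t)‖ ≤ B0 |σ| := by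
    rw [eventually_atTop]
    refine ⟨max i₀ 1, fun i hi => Filter.Eventually.of_forall (fun σ => ?_)⟩
    have hn1 : (1:ℝ) ≤ (i:ℝ) := by exact_mod_cast le_trans (le_max_right _ _) hi
    have hnM : M ≤ (i:ℝ) := le_trans hi₀ (by exact_mod_cast le_trans (le_max_left _ _) hi)
    have hw0 : 0 ≤ ∫ t in Icc ((i:ℝ)*σ - i) ((i:ℝ)*σ + i), h t := Wnn _ _
    have hw1 : (∫ t in Icc ((i:ℝ)*σ - i) ((i:ℝ)*σ + i), h t) ≤ 1 := Wle1 _ _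
    rw [Real.norm_eq_abs, abs_of_nonneg (Real.negMulLog_nonneg hw0 hw1)]
    by_cases hσ2 : |σ| ≤ 2
    · rw [hB0_def]
      dsimp only
      rw [if_pos hσ2]
      exact negMulLog_le_one hw0 hw1
    · push_neg at hσ2
      have hσ1 : 1 < |σ| := by linarith
      have hσpos : (1:ℝ) ≤ |σ| - 1 := by linarith
      have hMn : M ≤ (i:ℝ) * (|σ| - 1) := by nlinarith
      have hwle : (∫ t in Icc ((i:ℝ)*σ - i) ((i:ℝ)*σ + i), h t)
          ≤ 2 * (|σ|-1) ^ (-(1+ε)) := by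
        have hk := key (i:ℝ) σ (by linarith) hσ1 hMn
        have hle1 : ((i:ℝ)) ^ (-ε) ≤ 1 :=
          Real.rpow_le_one_of_one_le_of_nonpos hn1 (by linarith)
        calc (∫ t in Icc ((i:ℝ)*σ - i) ((i:ℝ)*σ + i), h t)
            ≤ 2 * (|σ|-1) ^ (-(1+ε)) * (i:ℝ)^(-ε) := hk
          _ ≤ 2 * (|σ|-1) ^ (-(1+ε)) * 1 := by
              apply mul_le_mul_of_nonneg_left hle1 (by positivity)
          _ = 2 * (|σ|-1) ^ (-(1+ε)) := by ring
      have hstep : Real.negMulLog (∫ t in Icc ((i:ℝ)*σ - i) ((i:ℝ)*σ + i), h t)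
          ≤ δ⁻¹ * (2 * (|σ|-1) ^ (-(1+ε))) ^ (1-δ) :=
        le_trans (negMulLog_le_rpow hδ0 hw0)
          (mul_le_mul_of_nonneg_left (Real.rpow_le_rpow hw0 hwle (by linarith))
            (inv_nonneg.2 hδ0.le))
      rw [hB0_def]
      dsimp only
      rw [if_neg (not_le.2 hσ2)]
      refine hstep.trans ?_
      have hb1 : (0:ℝ) ≤ (|σ|-1) ^ (-(1+ε)) := Real.rpow_nonneg (by linarith) _
      rw [Real.mul_rpow (by norm_num) hb1, ← Real.rpow_mul (by linarith : (0:ℝ) ≤ |σ|-1), hexp]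
      have h2le : (2:ℝ) ^ (1-δ) ≤ 2 := by
        nth_rewrite 2 [show (2:ℝ) = 2 ^ (1:ℝ) by rw [Real.rpow_one]]
        exact Real.rpow_le_rpow_of_exponent_le one_le_two (by linarith)
      calc δ⁻¹ * ((2:ℝ) ^ (1-δ) * (|σ|-1) ^ (-p))
          ≤ δ⁻¹ * (2 * (|σ|-1) ^ (-p)) := by
            apply mul_le_mul_of_nonneg_left
              (mul_le_mul_of_nonneg_right h2le (Real.rpow_nonneg (by linarith) _))
              (inv_nonneg.2 hδ0.le)
        _ = 2 * δ⁻¹ * (|σ|-1) ^ (-p) := by ring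
  -- a.e. pointwise convergence
  have h_lim : ∀ᵐ σ : ℝ, Tendsto (fun i : ℕ =>
      Real.negMulLog (∫ t in Icc ((i:ℝ)*σ - i) ((i:ℝ)*σ + i), h t)) atTop (𝓝 0) := by
    have hnull : volume ({-1, 1} : Set ℝ) = 0 :=
      Set.Countable.measure_zero ((Set.countable_singleton (1:ℝ)).insert (-1)) _
    rw [ae_iff]
    refine measure_mono_null (fun σ hσ => ?_) hnull
    simp only [mem_setOf_eq] at hσ
    by_contra hmem
    apply hσ
    have habs : |σ| ≠ 1 := by
      intro hab
      rcases (abs_eq (by norm_num : (0:ℝ) ≤ 1)).1 hab with rfl | rfl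
      · exact hmem (by simp)
      · exact hmem (by simp)
    rcases habs.lt_or_gt with hlt | hgt
    · -- |σ| < 1 : windows exhaust ℝ
      have hσm : -1 < σ ∧ σ < 1 := abs_lt.1 hlt
      have hW : Tendsto (fun i : ℕ => ∫ t in Icc ((i:ℝ)*σ - i) ((i:ℝ)*σ + i), h t)
          atTop (𝓝 1) := by
        have hmono : Monotone (fun i : ℕ => Icc ((i:ℝ)*σ - i) ((i:ℝ)*σ + i)) := by
          intro i j hij
          have hij' : (i:ℝ) ≤ j := by exact_mod_cast hij
          apply Icc_subset_Icc
          · nlinarith [mul_nonneg (sub_nonneg.2 hij') (sub_nonneg.2 hσm.2.le)]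
          · nlinarith [mul_nonneg (sub_nonneg.2 hij') (by linarith [hσm.1] : (0:ℝ) ≤ 1 + σ)]
        have hunion : (⋃ i : ℕ, Icc ((i:ℝ)*σ - i) ((i:ℝ)*σ + i)) = univ := by
          rw [eq_univ_iff_forall]
          intro t
          have hs1 : 0 < 1 - σ := by linarith [hσm.2]
          have hs2 : 0 < 1 + σ := by linarith [hσm.1]
          obtain ⟨N, hN⟩ := exists_nat_ge (max (|t|/(1-σ)) (|t|/(1+σ)))
          have h1 : |t|/(1-σ) ≤ N := le_trans (le_max_left _ _) hN
          have h2 : |t|/(1+σ) ≤ N := le_trans (le_max_right _ _) hN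
          have h1' : |t| ≤ (N:ℝ)*(1-σ) := by rwa [div_le_iff₀ hs1] at h1
          have h2' : |t| ≤ (N:ℝ)*(1+σ) := by rwa [div_le_iff₀ hs2] at h2
          refine mem_iUnion.2 ⟨N, ?_, ?_⟩
          · nlinarith [neg_abs_le t]
          · nlinarith [le_abs_self t]
        have hmt := tendsto_setIntegral_of_monotone (fun i : ℕ => measurableSet_Icc)
          hmono (h_int.integrableOn)
        rw [hunion] at hmt
        simpa [h_total, Measure.restrict_univ] using hmt
      have hcomp := (Real.continuous_negMulLog.tendsto 1).comp hW
      simpa [Function.comp_def] using hcomp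
    · -- |σ| > 1 : windows escape to infinity
      have hb : Tendsto (fun i : ℕ => 2 * (|σ|-1)^(-(1+ε)) * (i:ℝ)^(-ε)) atTop (𝓝 0) := by
        have h1 : Tendsto (fun i : ℕ => ((i:ℝ))^(-ε)) atTop (𝓝 0) :=
          (tendsto_rpow_neg_atTop hε).comp tendsto_natCast_atTop_atTop
        simpa using h1.const_mul (2 * (|σ|-1)^(-(1+ε)))
      have hWb : ∀ᶠ i : ℕ in atTop, (∫ t in Icc ((i:ℝ)*σ - i) ((i:ℝ)*σ + i), h t)
          ≤ 2 * (|σ|-1)^(-(1+ε)) * (i:ℝ)^(-ε) := by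
        have hev : ∀ᶠ i : ℕ in atTop, max 1 (M/(|σ|-1)) ≤ (i:ℝ) :=
          tendsto_natCast_atTop_atTop.eventually_ge_atTop _
        filter_upwards [hev] with i hi
        have hσ1 : 0 < |σ| - 1 := by linarith
        have hi1 : (1:ℝ) ≤ i := le_trans (le_max_left _ _) hi
        have hiM : M/(|σ|-1) ≤ (i:ℝ) := le_trans (le_max_right _ _) hi
        have hMn : M ≤ (i:ℝ)*(|σ|-1) := by rwa [div_le_iff₀ hσ1] at hiM
        exact key (i:ℝ) σ (by linarith) hgt hMn
      have hW0 : Tendsto (fun i : ℕ => ∫ t in Icc ((i:ℝ)*σ - i) ((i:ℝ)*σ + i), h t)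
          atTop (𝓝 0) :=
        tendsto_of_tendsto_of_tendsto_of_le_of_le' tendsto_const_nhds hb
          (Filter.Eventually.of_forall (fun i => Wnn _ _)) hWb
      have hcomp := (Real.continuous_negMulLog.tendsto 0).comp hW0
      simpa [Function.comp_def] using hcomp
  have hdct := tendsto_integral_filter_of_dominated_convergence (μ := volume)
    (F := fun (i : ℕ) (σ : ℝ) => Real.negMulLog (∫ t in Icc ((i:ℝ)*σ - i) ((i:ℝ)*σ + i), h t))
    (f := fun _ : ℝ => (0:ℝ)) (fun σ => B0 |σ|) hFmeas h_bound hB_int h_lim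
  simpa using hdct


end Stmt3Z

namespace Stmt3W
open Stmt3 Stmt3X Stmt3Y Stmt3Z

variable {f : ℝ → ℝ}

lemma f_int (hf_dens : ∫ t in Set.Ioi (0:ℝ), f t = 1) : IntegrableOn f (Ioi 0) := by
  by_contra hc
  rw [integral_undef hc] at hf_dens
  norm_num at hf_dens

-- value and integrability of the scale-mixture integral over Ioi 0
lemma rho_eq (hfint : IntegrableOn f (Ioi 0)) (hf_dens : ∫ t in Set.Ioi (0:ℝ), f t = 1)
    {a : ℝ} (ha : 0 < a) :
    ∫ τ in Set.Ioi (0:ℝ), (τ⁻¹ * f (a / τ)) * τ⁻¹ = a⁻¹ := by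
  have hcov := cov_div f a ha measurableSet_Ioi Subset.rfl
  rw [image_div_Ioi a ha, hf_dens] at hcov
  rw [MeasureTheory.integral_const_mul] at hcov
  rw [inv_eq_one_div, eq_div_iff (ne_of_gt ha), mul_comm]
  exact hcov.symm

lemma rho_integrable (hfint : IntegrableOn f (Ioi 0)) {a : ℝ} (ha : 0 < a) :
    IntegrableOn (fun θ : ℝ => θ⁻¹ * (θ⁻¹ * f (a / θ))) (Set.Ioi 0) := by
  refine cov_div_integrable f a ha measurableSet_Ioi Subset.rfl ?_
  rwa [image_div_Ioi a ha]

lemma G0_eq (hf_dens : ∫ t in Set.Ioi (0:ℝ), f t = 1) {a : ℝ} (ha : 0 < a) {n : ℝ}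
    (hn : 0 ≤ n) :
    ∫ τ in Icc (Real.exp (-n)) (Real.exp n), (τ⁻¹ * f (a / τ)) * τ⁻¹
      = a⁻¹ * ∫ y in Icc (a * Real.exp (-n)) (a * Real.exp n), f y := by
  have hsub : Icc (Real.exp (-n)) (Real.exp n) ⊆ Ioi 0 :=
    fun θ hθ => lt_of_lt_of_le (Real.exp_pos _) hθ.1
  have hcov := cov_div f a ha measurableSet_Icc hsub
  rw [image_div_Icc a ha (Real.exp_pos _) (Real.exp_le_exp.2 (by linarith)),
    MeasureTheory.integral_const_mul] at hcov
  have h1 : a / Real.exp n = a * Real.exp (-n) := by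
    rw [Real.exp_neg, div_eq_mul_inv]
  have h2 : a / Real.exp (-n) = a * Real.exp n := by
    rw [Real.exp_neg, div_eq_mul_inv, inv_inv]
  rw [h1, h2] at hcov
  rw [hcov, ← mul_assoc, inv_mul_cancel₀ (ne_of_gt ha), one_mul]

end Stmt3W

namespace Stmt3W2
open Stmt3 Stmt3X Stmt3Y Stmt3Z Stmt3W

set_option maxHeartbeats 1000000 in
lemma pointwise_reduction (f : ℝ → ℝ) (hf_nonneg : ∀ t, 0 ≤ f t)
    (hfint : IntegrableOn f (Ioi 0)) (hf_dens : ∫ t in Set.Ioi (0:ℝ), f t = 1)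
    {n : ℝ} (hn : 1 ≤ n) {x : ℝ} (hx : x ≠ 0) :
    (∫ θ in Set.Icc (Real.exp (-n)) (Real.exp n),
        ((θ⁻¹ * f (|x| / θ)) * ((2 * n)⁻¹ * θ⁻¹) /
            (∫ τ in Set.Icc (Real.exp (-n)) (Real.exp n),
              (τ⁻¹ * f (|x| / τ)) * ((2 * n)⁻¹ * τ⁻¹))) *
          Real.log
            (((θ⁻¹ * f (|x| / θ)) * ((2 * n)⁻¹ * θ⁻¹) /
                (∫ τ in Set.Icc (Real.exp (-n)) (Real.exp n),
                  (τ⁻¹ * f (|x| / τ)) * ((2 * n)⁻¹ * τ⁻¹))) /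
              ((θ⁻¹ * f (|x| / θ)) * θ⁻¹ /
                (∫ τ in Set.Ioi (0 : ℝ), (τ⁻¹ * f (|x| / τ)) * τ⁻¹)))) *
      (∫ θ in Set.Icc (Real.exp (-n)) (Real.exp n),
        (θ⁻¹ * f (|x| / θ)) * ((2 * n)⁻¹ * θ⁻¹))
    = (2 * n)⁻¹ * (|x|⁻¹ *
        Real.negMulLog (∫ y in Icc (|x| * Real.exp (-n)) (|x| * Real.exp n), f y)) := by
  have ha : 0 < |x| := abs_pos.2 hx
  set a := |x| with ha_def
  set K := ∫ y in Icc (a * Real.exp (-n)) (a * Real.exp n), f y with hK_def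
  have hc0 : ((2:ℝ) * n)⁻¹ ≠ 0 := by positivity
  have hρ : ∫ τ in Set.Ioi (0:ℝ), (τ⁻¹ * f (a / τ)) * τ⁻¹ = a⁻¹ :=
    rho_eq hfint hf_dens ha
  have hG0 : ∫ τ in Icc (Real.exp (-n)) (Real.exp n), (τ⁻¹ * f (a / τ)) * τ⁻¹
      = a⁻¹ * K := G0_eq hf_dens ha (by linarith)
  have hD : ∫ τ in Set.Icc (Real.exp (-n)) (Real.exp n),
      (τ⁻¹ * f (a / τ)) * ((2 * n)⁻¹ * τ⁻¹) = (2*n)⁻¹ * (a⁻¹ * K) := by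
    have hfe : (fun τ : ℝ => (τ⁻¹ * f (a / τ)) * ((2 * n)⁻¹ * τ⁻¹))
        = fun τ : ℝ => (2*n)⁻¹ * ((τ⁻¹ * f (a / τ)) * τ⁻¹) := by
      funext τ; ring
    rw [hfe, MeasureTheory.integral_const_mul, hG0]
  rw [hD, hρ]
  by_cases hK0 : K = 0
  · rw [hK0]
    have hz : ∀ θ ∈ Icc (Real.exp (-n)) (Real.exp n),
        ((θ⁻¹ * f (a / θ)) * ((2 * n)⁻¹ * θ⁻¹) / ((2*n)⁻¹ * (a⁻¹ * 0))) *
          Real.log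
            (((θ⁻¹ * f (a / θ)) * ((2 * n)⁻¹ * θ⁻¹) / ((2*n)⁻¹ * (a⁻¹ * 0))) /
              ((θ⁻¹ * f (a / θ)) * θ⁻¹ / a⁻¹)) = 0 := by
      intro θ _
      rw [mul_zero, mul_zero, div_zero, zero_mul]
    rw [setIntegral_congr_fun measurableSet_Icc hz]
    simp
  · have hKpos : 0 < K :=
      lt_of_le_of_ne (setIntegral_nonneg measurableSet_Icc (fun y _ => hf_nonneg y))
        (Ne.symm hK0)
    have haK : a⁻¹ * K ≠ 0 := by positivity
    have hz : ∀ θ ∈ Icc (Real.exp (-n)) (Real.exp n),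
        ((θ⁻¹ * f (a / θ)) * ((2 * n)⁻¹ * θ⁻¹) / ((2*n)⁻¹ * (a⁻¹ * K))) *
          Real.log
            (((θ⁻¹ * f (a / θ)) * ((2 * n)⁻¹ * θ⁻¹) / ((2*n)⁻¹ * (a⁻¹ * K))) /
              ((θ⁻¹ * f (a / θ)) * θ⁻¹ / a⁻¹))
        = ((θ⁻¹ * f (a / θ)) * θ⁻¹) * ((a⁻¹ * K)⁻¹ * Real.log K⁻¹) := by
      intro θ hθ
      have hθ0 : (0:ℝ) < θ := lt_of_lt_of_le (Real.exp_pos _) hθ.1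
      by_cases hu : f (a / θ) = 0
      · rw [hu]
        simp
      · have huv : (θ⁻¹ * f (a / θ)) * θ⁻¹ ≠ 0 := by
          have : θ⁻¹ ≠ 0 := inv_ne_zero (ne_of_gt hθ0)
          exact mul_ne_zero (mul_ne_zero this hu) this
        have h1 : (θ⁻¹ * f (a / θ)) * ((2 * n)⁻¹ * θ⁻¹) / ((2*n)⁻¹ * (a⁻¹ * K))
            = ((θ⁻¹ * f (a / θ)) * θ⁻¹) / (a⁻¹ * K) := by
          rw [show (θ⁻¹ * f (a / θ)) * ((2 * n)⁻¹ * θ⁻¹)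
              = (2*n)⁻¹ * ((θ⁻¹ * f (a / θ)) * θ⁻¹) by ring,
            mul_div_mul_left _ _ hc0]
        rw [h1]
        have harg : (((θ⁻¹ * f (a / θ)) * θ⁻¹) / (a⁻¹ * K)) /
            ((θ⁻¹ * f (a / θ)) * θ⁻¹ / a⁻¹) = K⁻¹ := by
          field_simp
        rw [harg]
        ring
    rw [setIntegral_congr_fun measurableSet_Icc hz, MeasureTheory.integral_mul_const, hG0]
    rw [show (a⁻¹ * K) * ((a⁻¹ * K)⁻¹ * Real.log K⁻¹) = Real.log K⁻¹ by
      rw [← mul_assoc, mul_inv_cancel₀ haK, one_mul]]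
    rw [Real.log_inv, Real.negMulLog]
    ring

end Stmt3W2

namespace Stmt3W3
open Stmt3 Stmt3X Stmt3Y Stmt3Z Stmt3W

set_option maxHeartbeats 1000000 in
lemma x_reduction (f : ℝ → ℝ) {n : ℝ} (hn : 1 ≤ n) :
    ∫ x : ℝ, (2*n)⁻¹ * (|x|⁻¹ *
        Real.negMulLog (∫ y in Icc (|x| * Real.exp (-n)) (|x| * Real.exp n), f y))
      = ∫ σ : ℝ, Real.negMulLog
          (∫ t in Icc (n*σ - n) (n*σ + n), Real.exp t * f (Real.exp t)) := by
  have hn0 : (0:ℝ) < n := by linarith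
  rw [MeasureTheory.integral_const_mul]
  have h2 : (∫ x : ℝ, |x|⁻¹ *
        Real.negMulLog (∫ y in Icc (|x| * Real.exp (-n)) (|x| * Real.exp n), f y))
      = 2 * ∫ y in Ioi (0:ℝ), y⁻¹ *
          Real.negMulLog (∫ z in Icc (y * Real.exp (-n)) (y * Real.exp n), f z) :=
    integral_comp_abs
      (f := fun y => y⁻¹ * Real.negMulLog (∫ z in Icc (y * Real.exp (-n)) (y * Real.exp n), f z))
  rw [h2]
  have h3 : (∫ y in Ioi (0:ℝ), y⁻¹ *
        Real.negMulLog (∫ z in Icc (y * Real.exp (-n)) (y * Real.exp n), f z))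
      = ∫ s : ℝ, Real.exp s * ((Real.exp s)⁻¹ *
          Real.negMulLog (∫ z in Icc (Real.exp s * Real.exp (-n)) (Real.exp s * Real.exp n), f z)) := by
    have hc := cov_exp (fun y => y⁻¹ *
      Real.negMulLog (∫ z in Icc (y * Real.exp (-n)) (y * Real.exp n), f z)) MeasurableSet.univ
    rw [image_univ, Real.range_exp, Measure.restrict_univ] at hc
    exact hc
  rw [h3]
  have h4 : (fun s : ℝ => Real.exp s * ((Real.exp s)⁻¹ *
        Real.negMulLog (∫ z in Icc (Real.exp s * Real.exp (-n)) (Real.exp s * Real.exp n), f z)))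
      = fun s : ℝ => Real.negMulLog
          (∫ t in Icc (s - n) (s + n), Real.exp t * f (Real.exp t)) := by
    funext s
    have h5 := cov_exp f (measurableSet_Icc : MeasurableSet (Icc (s-n) (s+n)))
    rw [exp_image_Icc] at h5
    rw [← Real.exp_add, ← Real.exp_add, show s + -n = s - n from (sub_eq_add_neg s n).symm,
      h5, ← mul_assoc, mul_inv_cancel₀ (Real.exp_ne_zero s), one_mul]
  rw [h4]
  have h6 := MeasureTheory.Measure.integral_comp_mul_left
    (fun s : ℝ => Real.negMulLog (∫ t in Icc (s - n) (s + n), Real.exp t * f (Real.exp t))) n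
  rw [abs_of_pos (by positivity : (0:ℝ) < n⁻¹), smul_eq_mul] at h6
  have h7 : (∫ s : ℝ, Real.negMulLog (∫ t in Icc (s - n) (s + n), Real.exp t * f (Real.exp t)))
      = n * ∫ σ : ℝ, Real.negMulLog
          (∫ t in Icc (n*σ - n) (n*σ + n), Real.exp t * f (Real.exp t)) := by
    rw [h6, ← mul_assoc, mul_inv_cancel₀ (ne_of_gt hn0), one_mul]
  rw [h7, ← mul_assoc, ← mul_assoc]
  rw [show (2*n)⁻¹ * 2 * n = 1 by field_simp, one_mul]

lemma tail_M {f : ℝ → ℝ} {ε : ℝ} (hε : 0 < ε)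
    (htail : Tendsto (fun t : ℝ => |t| ^ (1 + ε) * Real.exp t * f (Real.exp t))
      (cocompact ℝ) (𝓝 0)) :
    ∃ M : ℝ, 1 ≤ M ∧ ∀ t : ℝ, M ≤ |t| →
      Real.exp t * f (Real.exp t) ≤ |t| ^ (-(1+ε)) := by
  have h1 : ∀ᶠ t : ℝ in cocompact ℝ, abs (|t| ^ (1+ε) * Real.exp t * f (Real.exp t)) < 1 := by
    have hmp := Metric.tendsto_nhds.mp htail 1 one_pos
    refine hmp.mono (fun t ht => ?_)
    rwa [Real.dist_eq, sub_zero] at ht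
  rw [cocompact_eq_atBot_atTop, eventually_sup] at h1
  obtain ⟨h1b, h1t⟩ := h1
  rw [eventually_atBot] at h1b
  rw [eventually_atTop] at h1t
  obtain ⟨N2, hN2⟩ := h1b
  obtain ⟨N1, hN1⟩ := h1t
  refine ⟨max 1 (max N1 (-N2)), le_max_left _ _, fun t ht => ?_⟩
  have h1t' : 1 ≤ |t| := le_trans (le_max_left _ _) ht
  have hlt : abs (|t| ^ (1+ε) * Real.exp t * f (Real.exp t)) < 1 := by
    rcases le_or_gt 0 t with hsign | hsign
    · refine hN1 t ?_
      have habs : |t| = t := abs_of_nonneg hsign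
      have : N1 ≤ max 1 (max N1 (-N2)) := le_trans (le_max_left _ _) (le_max_right _ _)
      linarith [ht.trans_eq habs]
    · refine hN2 t ?_
      have habs : |t| = -t := abs_of_neg hsign
      have : -N2 ≤ max 1 (max N1 (-N2)) := le_trans (le_max_right _ _) (le_max_right _ _)
      have h2 : -N2 ≤ -t := by linarith [ht.trans_eq habs]
      linarith
  have habs2 : |t| ^ (1+ε) * (Real.exp t * f (Real.exp t)) ≤ 1 := by
    calc |t| ^ (1+ε) * (Real.exp t * f (Real.exp t))
        = |t| ^ (1+ε) * Real.exp t * f (Real.exp t) := by ring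
      _ ≤ abs (|t| ^ (1+ε) * Real.exp t * f (Real.exp t)) := le_abs_self _
      _ ≤ 1 := hlt.le
  have hpow : 0 < |t| ^ (1+ε) := Real.rpow_pos_of_pos (by linarith) _
  rw [Real.rpow_neg (abs_nonneg t), inv_eq_one_div, le_div_iff₀ hpow, mul_comm]
  exact habs2

end Stmt3W3

open Stmt3 Stmt3X Stmt3Y Stmt3Z Stmt3W Stmt3W2 Stmt3W3

set_option maxHeartbeats 2000000

/-- For a scale model `p(x|θ) = θ⁻¹ f(|x|/θ)` whose density
satisfies `|t|^(1+ε) eᵗ f(eᵗ) → 0`, the prior `π(θ) = θ⁻¹` is permissible: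
the formal posterior is proper for every `x ≠ 0`, and with the compact sets
`Θᵢ = [e⁻ⁱ, eⁱ]` the expected logarithmic discrepancy tends to `0`. -/
theorem stmt_3
    (f : ℝ → ℝ) (hf_meas : Measurable f) (hf_nonneg : ∀ t, 0 ≤ f t)
    (hf_dens : ∫ t in Set.Ioi (0 : ℝ), f t = 1)
    (ε : ℝ) (hε : 0 < ε)
    (htail : Tendsto (fun t : ℝ => |t| ^ (1 + ε) * Real.exp t * f (Real.exp t))
      (cocompact ℝ) (nhds 0)) :
    (∀ x : ℝ, x ≠ 0 →
      IntegrableOn (fun θ : ℝ => θ⁻¹ * (θ⁻¹ * f (|x| / θ))) (Set.Ioi 0) ∧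
        0 < ∫ θ in Set.Ioi (0 : ℝ), θ⁻¹ * (θ⁻¹ * f (|x| / θ))) ∧
    Tendsto
      (fun i : ℕ =>
        ∫ x : ℝ,
          (∫ θ in Set.Icc (Real.exp (-(i : ℝ))) (Real.exp (i : ℝ)),
              ((θ⁻¹ * f (|x| / θ)) * ((2 * (i : ℝ))⁻¹ * θ⁻¹) /
                  (∫ τ in Set.Icc (Real.exp (-(i : ℝ))) (Real.exp (i : ℝ)),
                    (τ⁻¹ * f (|x| / τ)) * ((2 * (i : ℝ))⁻¹ * τ⁻¹))) *
                Real.log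
                  (((θ⁻¹ * f (|x| / θ)) * ((2 * (i : ℝ))⁻¹ * θ⁻¹) /
                      (∫ τ in Set.Icc (Real.exp (-(i : ℝ))) (Real.exp (i : ℝ)),
                        (τ⁻¹ * f (|x| / τ)) * ((2 * (i : ℝ))⁻¹ * τ⁻¹))) /
                    ((θ⁻¹ * f (|x| / θ)) * θ⁻¹ /
                      (∫ τ in Set.Ioi (0 : ℝ), (τ⁻¹ * f (|x| / τ)) * τ⁻¹)))) *
            (∫ θ in Set.Icc (Real.exp (-(i : ℝ))) (Real.exp (i : ℝ)),
              (θ⁻¹ * f (|x| / θ)) * ((2 * (i : ℝ))⁻¹ * θ⁻¹)))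
      atTop (nhds 0) := by
  have hfint : IntegrableOn f (Set.Ioi 0) := f_int hf_dens
  constructor
  · intro x hx
    have ha : 0 < |x| := abs_pos.2 hx
    refine ⟨rho_integrable hfint ha, ?_⟩
    have h1 : ∫ θ in Set.Ioi (0:ℝ), θ⁻¹ * (θ⁻¹ * f (|x| / θ)) = |x|⁻¹ := by
      rw [← rho_eq hfint hf_dens ha]
      exact integral_congr_ae (Filter.Eventually.of_forall (fun θ => by ring))
    rw [h1]
    positivity
  · -- the expected discrepancies tend to zero
    have h_nonneg : ∀ t : ℝ, 0 ≤ Real.exp t * f (Real.exp t) :=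
      fun t => mul_nonneg (Real.exp_pos t).le (hf_nonneg _)
    have h_int : Integrable (fun t : ℝ => Real.exp t * f (Real.exp t)) := by
      have := cov_exp_integrable f MeasurableSet.univ
        (by rwa [image_univ, Real.range_exp])
      rwa [integrableOn_univ] at this
    have h_total : ∫ t : ℝ, Real.exp t * f (Real.exp t) = 1 := by
      have hc := cov_exp f MeasurableSet.univ
      rw [image_univ, Real.range_exp, Measure.restrict_univ] at hc
      rw [← hc, hf_dens]
    obtain ⟨M, hM1, htb⟩ := tail_M hε htail
    have hmain := main_tendsto (fun t : ℝ => Real.exp t * f (Real.exp t))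
      h_nonneg h_int h_total hε hM1 htb
    refine Tendsto.congr' ?_ hmain
    filter_upwards [eventually_ge_atTop 1] with i hi
    have hn : (1:ℝ) ≤ (i:ℝ) := by exact_mod_cast hi
    have hae0 : ∀ᵐ x : ℝ, x ≠ 0 := by
      rw [MeasureTheory.ae_iff]
      have hs : {x : ℝ | ¬ x ≠ 0} = {0} := by ext y; simp
      rw [hs]
      exact measure_singleton 0
    have hptw : (∫ x : ℝ,
          (∫ θ in Set.Icc (Real.exp (-(i : ℝ))) (Real.exp (i : ℝ)),
              ((θ⁻¹ * f (|x| / θ)) * ((2 * (i : ℝ))⁻¹ * θ⁻¹) /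
                  (∫ τ in Set.Icc (Real.exp (-(i : ℝ))) (Real.exp (i : ℝ)),
                    (τ⁻¹ * f (|x| / τ)) * ((2 * (i : ℝ))⁻¹ * τ⁻¹))) *
                Real.log
                  (((θ⁻¹ * f (|x| / θ)) * ((2 * (i : ℝ))⁻¹ * θ⁻¹) /
                      (∫ τ in Set.Icc (Real.exp (-(i : ℝ))) (Real.exp (i : ℝ)),
                        (τ⁻¹ * f (|x| / τ)) * ((2 * (i : ℝ))⁻¹ * τ⁻¹))) /
                    ((θ⁻¹ * f (|x| / θ)) * θ⁻¹ /
                      (∫ τ in Set.Ioi (0 : ℝ), (τ⁻¹ * f (|x| / τ)) * τ⁻¹)))) *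
            (∫ θ in Set.Icc (Real.exp (-(i : ℝ))) (Real.exp (i : ℝ)),
              (θ⁻¹ * f (|x| / θ)) * ((2 * (i : ℝ))⁻¹ * θ⁻¹)))
        = ∫ x : ℝ, (2*(i:ℝ))⁻¹ * (|x|⁻¹ *
            Real.negMulLog (∫ y in Set.Icc (|x| * Real.exp (-(i:ℝ))) (|x| * Real.exp (i:ℝ)), f y)) := by
      apply integral_congr_ae
      filter_upwards [hae0] with x hx
      exact pointwise_reduction f hf_nonneg hfint hf_dens hn hx
    rw [show (fun t : ℝ => Real.exp t * f (Real.exp t)) = fun t : ℝ => Real.exp t * f (Real.exp t)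
      from rfl]
    symm
    calc _ = _ := hptw
      _ = ∫ σ : ℝ, Real.negMulLog
          (∫ t in Set.Icc ((i:ℝ)*σ - (i:ℝ)) ((i:ℝ)*σ + (i:ℝ)), Real.exp t * f (Real.exp t)) :=
        x_reduction f hn
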